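/- Optimal cost of the restricted task: let Π be a planning task, s a state in which the fresh atom ε is false and with G ⊄ s, and 𝒜' ⊆ 𝒜 a set of actions. Let h*_Π(s) ∈ ℕ∞ denote the minimal length of a plan of Π starting from s (∞ if none exists), and similarly for Π_{𝒜'}. Then h*_{Π_{𝒜'}}(s) = min over a ∈ 𝒜' applicable in s of (1 + h*_Π(succ(s,a))), where the minimum over the empty set is ∞. -/

import Mathlib

namespace PS

/-- A ground planning task over atom type `Atom` and action type `Act`. -/
structure GroundTask (Atom Act : Type) where
  pre : Act → Set Atom
  add : Act → Set Atom
  del : Act → Set Atom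
  init : Set Atom
  goal : Set Atom

variable {Atom Act : Type}

/-- `succ(s,a) = (s \ del(a)) ∪ add(a)`. -/
def applyAct (P : GroundTask Atom Act) (s : Set Atom) (a : Act) : Set Atom :=
  (s \ P.del a) ∪ P.add a

/-- `IsPlanFrom P s π`: `π` is a valid plan for `P` starting from state `s`. -/
inductive IsPlanFrom (P : GroundTask Atom Act) : Set Atom → List Act → Prop
  | nil {s : Set Atom} : P.goal ⊆ s → IsPlanFrom P s []
  | cons {s : Set Atom} {a : Act} {l : List Act} :
      P.pre a ⊆ s → IsPlanFrom P (applyAct P s a) l → IsPlanFrom P s (a :: l)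

/-- The `𝒜'`-restricted task `Π_{𝒜'}`. Atoms are `Option Atom`, with the fresh atom
`ε = none` (initially false). Actions are either original actions (`Sum.inl`), which get `ε`
added to their precondition, or new copies `a⁺` (`Sum.inr`) of actions `a ∈ 𝒜'`, which are
identical to `a` except for the additional add effect `ε`. -/
def restrict (P : GroundTask Atom Act) (A' : Set Act) :
    GroundTask (Option Atom) (Act ⊕ {a : Act // a ∈ A'}) where
  pre := fun b => match b with
    | .inl a => insert none (some '' P.pre a)
    | .inr a => some '' P.pre a.val
  add := fun b => match b with
    | .inl a => some '' P.add a
    | .inr a => insert (none : Option Atom) (some '' P.add a.val)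
  del := fun b => match b with
    | .inl a => some '' P.del a
    | .inr a => some '' P.del a.val
  init := some '' P.init
  goal := some '' P.goal

/-- Replace each copy `a⁺` by its original `a`, keeping original actions unchanged. -/
def unrestrict {A' : Set Act} : Act ⊕ {a : Act // a ∈ A'} → Act :=
  Sum.elim id Subtype.val


/-- `h*`: the minimal length of a plan starting from `s` (`⊤` if none exists). -/
noncomputable def hStar (P : GroundTask Atom Act) (s : Set Atom) : ℕ∞ :=
  sInf {n : ℕ∞ | ∃ π : List Act, IsPlanFrom P s π ∧ (π.length : ℕ∞) = n}

lemma some_image_subset_iff {A B : Set Atom} : some '' A ⊆ some '' B ↔ A ⊆ B :=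
  Set.image_subset_image_iff (Option.some_injective _)

lemma some_image_subset_insert_iff {A B : Set Atom} :
    some '' A ⊆ insert none (some '' B) ↔ A ⊆ B := by
  constructor
  · intro h x hx
    have := h ⟨x, hx, rfl⟩
    simpa using this
  · intro h x hx
    obtain ⟨y, hy, rfl⟩ := hx
    exact Or.inr ⟨y, h hy, rfl⟩

lemma insert_none_subset_iff {A B : Set Atom} :
    insert none (some '' A) ⊆ insert none (some '' B) ↔ A ⊆ B := by
  constructor
  · intro h
    exact some_image_subset_insert_iff.mp ((Set.subset_insert _ _).trans h)
  · intro h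
    exact Set.insert_subset_insert (Set.image_mono h)

lemma applyAct_restrict_insert (P : GroundTask Atom Act) (A' : Set Act)
    (t : Set Atom) (b : Act ⊕ {a : Act // a ∈ A'}) :
    applyAct (restrict P A') (insert none (some '' t)) b =
      insert none (some '' applyAct P t (unrestrict b)) := by
  cases b <;> (ext x; cases x <;> simp [applyAct, restrict, unrestrict] <;> tauto)

lemma applyAct_restrict_some (P : GroundTask Atom Act) (A' : Set Act)
    (s : Set Atom) (a : {x : Act // x ∈ A'}) :
    applyAct (restrict P A') (some '' s) (Sum.inr a) =
      insert none (some '' applyAct P s a.val) := by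
  ext x; cases x <;> simp [applyAct, restrict] <;> tauto

lemma plan_of_restrict (P : GroundTask Atom Act) {A' : Set Act}
    {t : Set Atom} {π : List (Act ⊕ {a : Act // a ∈ A'})}
    (h : IsPlanFrom (restrict P A') (insert none (some '' t)) π) :
    IsPlanFrom P t (π.map unrestrict) := by
  induction π generalizing t with
  | nil =>
    cases h with
    | nil hg => exact .nil (some_image_subset_insert_iff.mp hg)
  | cons b l ih =>
    cases h with
    | cons hpre hrest =>
      rw [applyAct_restrict_insert] at hrest
      refine .cons ?_ (ih hrest)
      cases b with
      | inl a => exact insert_none_subset_iff.mp hpre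
      | inr a => exact some_image_subset_insert_iff.mp hpre

lemma restrict_plan_of_plan (P : GroundTask Atom Act) (A' : Set Act)
    {t : Set Atom} {π : List Act} (h : IsPlanFrom P t π) :
    IsPlanFrom (restrict P A') (insert none (some '' t))
      (π.map (Sum.inl : Act → Act ⊕ {a : Act // a ∈ A'})) := by
  induction h with
  | nil hg => exact .nil (some_image_subset_insert_iff.mpr hg)
  | @cons t' a l hpre hrest ih =>
    refine .cons (insert_none_subset_iff.mpr hpre) ?_
    have := applyAct_restrict_insert P A' t' (Sum.inl a)
    rw [this]
    exact ih

lemma hStar_le_length {P : GroundTask Atom Act} {s : Set Atom} {π : List Act}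
    (h : IsPlanFrom P s π) : hStar P s ≤ (π.length : ℕ∞) :=
  sInf_le ⟨π, h, rfl⟩

lemma hStar_eq_top {P : GroundTask Atom Act} {s : Set Atom}
    (h : ¬ ∃ π, IsPlanFrom P s π) : hStar P s = ⊤ := by
  have he : {n : ℕ∞ | ∃ π : List Act, IsPlanFrom P s π ∧ (π.length : ℕ∞) = n} = ∅ := by
    ext n
    simp only [Set.mem_setOf_eq, Set.mem_empty_iff_false, iff_false]
    rintro ⟨π, hπ, -⟩
    exact h ⟨π, hπ⟩
  rw [hStar, he, sInf_empty]

lemma hStar_attained {P : GroundTask Atom Act} {s : Set Atom}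
    (h : ∃ π, IsPlanFrom P s π) :
    ∃ π, IsPlanFrom P s π ∧ hStar P s = (π.length : ℕ∞) := by
  classical
  obtain ⟨π, hπ⟩ := h
  set T : Set ℕ := {n | ∃ π : List Act, IsPlanFrom P s π ∧ π.length = n} with hT
  have hTne : T.Nonempty := ⟨π.length, π, hπ, rfl⟩
  have hm := Nat.sInf_mem hTne
  rw [hT, Set.mem_setOf_eq] at hm
  obtain ⟨π₀, hπ₀, hlen⟩ := hm
  refine ⟨π₀, hπ₀, le_antisymm ?_ ?_⟩
  · exact hStar_le_length hπ₀
  · apply le_sInf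
    rintro n ⟨π', hπ', rfl⟩
    rw [hlen]
    have hmem : π'.length ∈ T := ⟨π', hπ', rfl⟩
    exact_mod_cast Nat.sInf_le hmem

/-- **Optimal cost of the restricted task**: for a state `s` in which the fresh atom `ε` is
false (embedded as `some '' s`) and with `G ⊄ s`,
`h*_{Π_{𝒜'}}(s) = min_{a ∈ 𝒜' applicable in s} (1 + h*_Π(succ(s,a)))`,
where the minimum over the empty set is `∞`. -/
theorem restricted_task_cost {Atom Act : Type} (P : GroundTask Atom Act)
    (s : Set Atom) (A' : Set Act) (hG : ¬ P.goal ⊆ s) :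
    hStar (restrict P A') (some '' s) =
      ⨅ (a : Act) (_ : a ∈ A') (_ : P.pre a ⊆ s), (1 + hStar P (applyAct P s a)) := by
  apply le_antisymm
  · apply le_iInf; intro a
    apply le_iInf; intro ha
    apply le_iInf; intro hpre
    by_cases hex : ∃ π, IsPlanFrom P (applyAct P s a) π
    · obtain ⟨π₀, hπ₀, heq⟩ := hStar_attained hex
      have hplan : IsPlanFrom (restrict P A') (some '' s)
          (Sum.inr ⟨a, ha⟩ :: π₀.map (Sum.inl : Act → Act ⊕ {x : Act // x ∈ A'})) := by
        refine .cons ?_ ?_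
        · exact Set.image_mono hpre
        · rw [applyAct_restrict_some]
          exact restrict_plan_of_plan P A' hπ₀
      have := hStar_le_length hplan
      refine this.trans ?_
      rw [heq]
      simp only [List.length_cons, List.length_map]
      push_cast
      rw [add_comm]
    · rw [hStar_eq_top hex]
      simp
  · apply le_sInf
    rintro n ⟨π, hπ, rfl⟩
    cases π with
    | nil =>
      cases hπ with
      | nil hg => exact absurd (some_image_subset_iff.mp hg) hG
    | cons b l =>
      cases hπ with
      | cons hpre hrest =>
        cases b with
        | inl a =>
          exfalso
          have := hpre (Set.mem_insert _ _)
          simp at this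
        | inr a =>
          rw [applyAct_restrict_some] at hrest
          have hpre' : P.pre a.val ⊆ s := some_image_subset_iff.mp hpre
          have hplan := plan_of_restrict P hrest
          have hle : hStar P (applyAct P s a.val) ≤ (l.length : ℕ∞) := by
            have := hStar_le_length hplan
            simpa using this
          calc ⨅ (c : Act) (_ : c ∈ A') (_ : P.pre c ⊆ s), (1 + hStar P (applyAct P s c))
              ≤ 1 + hStar P (applyAct P s a.val) := by
                refine iInf_le_of_le a.val ?_
                refine iInf_le_of_le a.prop ?_
                exact iInf_le_of_le hpre' le_rfl
            _ ≤ 1 + (l.length : ℕ∞) := by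
                exact add_le_add_right hle 1
            _ = ((Sum.inr a :: l).length : ℕ∞) := by
                simp only [List.length_cons]
                push_cast
                rw [add_comm]

end PS
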